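/- Fix an integer D ≥ 2. For each real β with (D-1)β > 1, set ℓ(β) = ⌊β⌋ + 1 and η(β) = β - ⌊β⌋, let x(β) denote the unique root in (0,1) of the equation 1 = (D-1)(x + x² + ⋯ + x^{ℓ(β)-1} + η(β) x^{ℓ(β)}), and define q_D(β) = -log x(β)/log D. Then the function β ↦ q_D(β) is well defined and continuous on the set {β ∈ ℝ : (D-1)β > 1}, and takes values in (0,1). -/

import Mathlib

open Filter Topology

noncomputable section DecayAux

/-- The polynomial map appearing in the root equation. -/
def gD (D : ℕ) (β x : ℝ) : ℝ :=
  ((D:ℝ) - 1) * ((∑ j ∈ Finset.Icc 1 ⌊β⌋₊, x ^ j) + (β - (⌊β⌋₊ : ℝ)) * x ^ (⌊β⌋₊ + 1))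

lemma gD_def (D : ℕ) (β x : ℝ) : gD D β x =
    ((D:ℝ) - 1) * ((∑ j ∈ Finset.Icc 1 ⌊β⌋₊, x ^ j) + (β - (⌊β⌋₊ : ℝ)) * x ^ (⌊β⌋₊ + 1)) :=
  rfl

lemma gD_contX (D : ℕ) (β : ℝ) : Continuous (gD D β) := by
  unfold gD; fun_prop

lemma beta_pos {D : ℕ} (hD : 2 ≤ D) {β : ℝ} (hβ : ((D:ℝ) - 1) * β > 1) : 0 < β := by
  have h1 : (1:ℝ) ≤ (D:ℝ) - 1 := by
    have : (2:ℝ) ≤ (D:ℝ) := by exact_mod_cast hD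
    linarith
  nlinarith

lemma gD_strictMonoOn {D : ℕ} (hD : 2 ≤ D) {β : ℝ} (hβ : 0 < β) :
    StrictMonoOn (gD D β) (Set.Icc 0 1) := by
  intro x hx y hy hxy
  have hD1 : (0:ℝ) < (D:ℝ) - 1 := by
    have : (2:ℝ) ≤ (D:ℝ) := by exact_mod_cast hD
    linarith
  have hη : (0:ℝ) ≤ β - (⌊β⌋₊ : ℝ) := by
    have := Nat.floor_le hβ.le
    linarith
  have hpow : x ^ (⌊β⌋₊ + 1) ≤ y ^ (⌊β⌋₊ + 1) := pow_le_pow_left₀ hx.1 hxy.le _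
  rw [gD_def, gD_def]
  apply mul_lt_mul_of_pos_left _ hD1
  rcases Nat.eq_zero_or_pos ⌊β⌋₊ with h0 | h1
  · have hηβ : 0 < β - (⌊β⌋₊:ℝ) := by rw [h0]; simpa using hβ
    rw [h0]
    have he : Finset.Icc 1 0 = (∅ : Finset ℕ) := by decide
    rw [he]
    simp only [Finset.sum_empty, zero_add, pow_one]
    rw [h0] at hηβ
    nlinarith
  · have hstrict : (∑ j ∈ Finset.Icc 1 ⌊β⌋₊, x ^ j) < ∑ j ∈ Finset.Icc 1 ⌊β⌋₊, y ^ j := by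
      apply Finset.sum_lt_sum
      · intro j _; exact pow_le_pow_left₀ hx.1 hxy.le j
      · exact ⟨1, Finset.mem_Icc.2 ⟨le_refl 1, h1⟩, by simpa using hxy⟩
    nlinarith [mul_le_mul_of_nonneg_left hpow hη]

lemma gD_zero (D : ℕ) (β : ℝ) : gD D β 0 = 0 := by
  rw [gD_def]
  have h1 : (∑ j ∈ Finset.Icc 1 ⌊β⌋₊, (0:ℝ) ^ j) = 0 := by
    apply Finset.sum_eq_zero
    intro j hj
    exact zero_pow (by have := (Finset.mem_Icc.1 hj).1; omega)
  rw [h1]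
  simp

lemma gD_one {D : ℕ} {β : ℝ} (hβ : 0 ≤ β) : gD D β 1 = ((D:ℝ) - 1) * β := by
  simp [gD_def, Finset.sum_const, Nat.card_Icc]

lemma gD_geom {D : ℕ} (hD : 2 ≤ D) (n : ℕ) :
    ((D:ℝ) - 1) * (∑ j ∈ Finset.Icc 1 n, ((D:ℝ)⁻¹) ^ j) = 1 - ((D:ℝ)⁻¹) ^ n := by
  have hDpos : (0:ℝ) < (D:ℝ) := by
    have : (2:ℝ) ≤ (D:ℝ) := by exact_mod_cast hD
    linarith
  induction n with
  | zero => simp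
  | succ n ih =>
    rw [Finset.sum_Icc_succ_top (by omega : 1 ≤ n + 1), mul_add, ih]
    have hne : (D:ℝ) ≠ 0 := ne_of_gt hDpos
    field_simp
    have h : (D:ℝ) * (1 / (D:ℝ)) = 1 := by field_simp
    rw [pow_succ]
    linear_combination (1 / (D:ℝ)) ^ n * h

lemma gD_inv_lt_one {D : ℕ} (hD : 2 ≤ D) {β : ℝ} (hβ : 0 < β) :
    gD D β ((D:ℝ)⁻¹) < 1 := by
  have hD2 : (2:ℝ) ≤ (D:ℝ) := by exact_mod_cast hD
  have hDpos : (0:ℝ) < (D:ℝ) := by linarith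
  set n := ⌊β⌋₊ with hn
  set y := (D:ℝ)⁻¹ with hy
  have hη0 : (0:ℝ) ≤ β - (n : ℝ) := by
    have := Nat.floor_le hβ.le; linarith
  have hη1 : β - (n:ℝ) < 1 := by
    have := Nat.lt_floor_add_one β; linarith
  have hyp : (0:ℝ) < y ^ (n+1) := by positivity
  have hDy : (D:ℝ) * y = 1 := by rw [hy]; exact mul_inv_cancel₀ hDpos.ne'
  have hrel : y ^ n = (D:ℝ) * y ^ (n+1) := by
    rw [pow_succ]
    calc y ^ n = y ^ n * ((D:ℝ) * y) := by rw [hDy, mul_one]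
    _ = (D:ℝ) * (y ^ n * y) := by ring
  have : gD D β y = (1 - y ^ n) + ((D:ℝ) - 1) * ((β - (n:ℝ)) * y ^ (n+1)) := by
    rw [gD, mul_add, gD_geom hD]
  rw [this]
  have h1 : ((D:ℝ) - 1) * ((β - (n:ℝ)) * y ^ (n+1)) < ((D:ℝ) - 1) * y ^ (n+1) := by
    have : (0:ℝ) < ((D:ℝ) - 1) * y ^ (n+1) := mul_pos (by linarith) hyp
    nlinarith
  nlinarith

lemma gD_exists {D : ℕ} (hD : 2 ≤ D) {β : ℝ} (hβ : ((D:ℝ) - 1) * β > 1) :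
    ∃ x ∈ Set.Ioo (0:ℝ) 1, gD D β x = 1 := by
  have hb := beta_pos hD hβ
  have h := intermediate_value_Ioo (le_of_lt one_pos) (gD_contX D β).continuousOn
  have h1 : (1:ℝ) ∈ Set.Ioo (gD D β 0) (gD D β 1) := by
    rw [gD_zero, gD_one hb.le]; exact ⟨one_pos, hβ⟩
  obtain ⟨x, hx, hgx⟩ := h h1
  exact ⟨x, hx, hgx⟩

lemma gD_unique {D : ℕ} (hD : 2 ≤ D) {β : ℝ} (hβ : ((D:ℝ) - 1) * β > 1) :
    ∃! x : ℝ, x ∈ Set.Ioo (0:ℝ) 1 ∧ gD D β x = 1 := by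
  obtain ⟨x, hx, hgx⟩ := gD_exists hD hβ
  refine ⟨x, ⟨hx, hgx⟩, ?_⟩
  rintro y ⟨hy, hgy⟩
  exact (gD_strictMonoOn hD (beta_pos hD hβ)).injOn
    (Set.Ioo_subset_Icc_self hy) (Set.Ioo_subset_Icc_self hx) (hgy.trans hgx.symm)

open Classical in
/-- the root -/
def rD (D : ℕ) (β : ℝ) : ℝ :=
  if h : ∃ x ∈ Set.Ioo (0:ℝ) 1, gD D β x = 1 then h.choose else 1/2

lemma rD_spec {D : ℕ} (hD : 2 ≤ D) {β : ℝ} (hβ : ((D:ℝ) - 1) * β > 1) :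
    rD D β ∈ Set.Ioo (0:ℝ) 1 ∧ gD D β (rD D β) = 1 := by
  rw [rD]; rw [dif_pos (gD_exists hD hβ)]
  exact ⟨(gD_exists hD hβ).choose_spec.1, (gD_exists hD hβ).choose_spec.2⟩

lemma rD_gt_inv {D : ℕ} (hD : 2 ≤ D) {β : ℝ} (hβ : ((D:ℝ) - 1) * β > 1) :
    (D:ℝ)⁻¹ < rD D β := by
  have hb := beta_pos hD hβ
  have hD2 : (2:ℝ) ≤ (D:ℝ) := by exact_mod_cast hD
  obtain ⟨hmem, heq⟩ := rD_spec hD hβ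
  by_contra h
  push_neg at h
  have hinv : (D:ℝ)⁻¹ ∈ Set.Icc (0:ℝ) 1 := by
    constructor
    · positivity
    · rw [inv_le_one_iff₀]; right; linarith
  have := (gD_strictMonoOn hD hb).monotoneOn (Set.Ioo_subset_Icc_self hmem) hinv h
  have h2 := gD_inv_lt_one hD hb
  rw [heq] at this
  linarith

lemma floor_eq_on {m : ℕ} {β : ℝ} (h1 : (m:ℝ) ≤ β) (h2 : β < (m:ℝ) + 1) : ⌊β⌋₊ = m := by
  have hβ0 : (0:ℝ) ≤ β := le_trans (by positivity) h1
  rw [Nat.floor_eq_iff hβ0]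
  exact ⟨h1, h2⟩

lemma gD_contB (D : ℕ) (y : ℝ) {β0 : ℝ} (hβ0 : 0 < β0) :
    ContinuousAt (fun β => gD D β y) β0 := by
  rcases eq_or_lt_of_le (Nat.floor_le hβ0.le : ((⌊β0⌋₊:ℕ):ℝ) ≤ β0) with heq | hlt
  · -- β0 = n is a positive integer
    obtain ⟨m, hm⟩ : ∃ m : ℕ, ⌊β0⌋₊ = m + 1 := by
      refine ⟨⌊β0⌋₊ - 1, ?_⟩
      have hne : ⌊β0⌋₊ ≠ 0 := by
        intro h0
        rw [h0] at heq
        simp at heq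
        exact absurd heq.symm (ne_of_gt hβ0)
      omega
    rw [← heq, hm]
    push_cast
    apply continuousAt_iff_continuous_left_right.2
    constructor
    · -- left continuity via Ioc m (m+1)
      rw [← continuousWithinAt_Ioc_iff_Iic (by push_cast; linarith : (m:ℝ) < (m:ℝ) + 1)]
      have hcont : Continuous (fun β : ℝ =>
          ((D:ℝ) - 1) * ((∑ j ∈ Finset.Icc 1 m, y ^ j) + (β - (m : ℝ)) * y ^ (m + 1))) := by
        fun_prop
      apply (hcont.continuousWithinAt).congr
      · intro β hβ
        rcases eq_or_lt_of_le hβ.2 with hb | hb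
        · -- β = m + 1
          rw [hb, gD, floor_eq_on (m := m + 1) (by push_cast; linarith) (by push_cast; linarith)]
          rw [Finset.sum_Icc_succ_top (by omega : 1 ≤ m + 1)]
          push_cast
          ring
        · rw [gD, floor_eq_on hβ.1.le hb]
      · rw [gD, floor_eq_on (m := m + 1) (by push_cast; linarith) (by push_cast; linarith)]
        rw [Finset.sum_Icc_succ_top (by omega : 1 ≤ m + 1)]
        push_cast
        ring
    · -- right continuity via Ico (m+1) (m+2)
      rw [← continuousWithinAt_Ico_iff_Ici (by linarith : (m:ℝ) + 1 < (m:ℝ) + 1 + 1)]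
      have hcont : Continuous (fun β : ℝ =>
          ((D:ℝ) - 1) * ((∑ j ∈ Finset.Icc 1 (m+1), y ^ j) + (β - ((m:ℝ) + 1)) * y ^ (m + 2))) := by
        fun_prop
      apply (hcont.continuousWithinAt).congr
      · intro β hβ
        rw [gD, floor_eq_on (m := m + 1) (by push_cast; linarith [hβ.1]) (by push_cast; linarith [hβ.2])]
        push_cast
        ring
      · rw [gD, floor_eq_on (m := m + 1) (by push_cast; linarith) (by push_cast; linarith)]
        push_cast
        ring
  · -- non-integer case
    have hub : β0 < ((⌊β0⌋₊:ℕ):ℝ) + 1 := Nat.lt_floor_add_one β0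
    have hmem : β0 ∈ Set.Ioo ((⌊β0⌋₊:ℕ):ℝ) (((⌊β0⌋₊:ℕ):ℝ)+1) := ⟨hlt, hub⟩
    have hcont : Continuous (fun β : ℝ =>
        ((D:ℝ) - 1) * ((∑ j ∈ Finset.Icc 1 ⌊β0⌋₊, y ^ j) + (β - ((⌊β0⌋₊:ℕ) : ℝ)) * y ^ (⌊β0⌋₊ + 1))) := by
      fun_prop
    apply hcont.continuousAt.congr
    filter_upwards [isOpen_Ioo.mem_nhds hmem] with β hβ
    rw [gD, floor_eq_on hβ.1.le hβ.2]

lemma rD_lt_of_gt {D : ℕ} (hD : 2 ≤ D) {β b : ℝ} (hβ : ((D:ℝ) - 1) * β > 1)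
    (hb : b ∈ Set.Icc (0:ℝ) 1) (h : 1 < gD D β b) : rD D β < b := by
  obtain ⟨hmem, heq⟩ := rD_spec hD hβ
  by_contra hc
  push_neg at hc
  have := (gD_strictMonoOn hD (beta_pos hD hβ)).monotoneOn hb (Set.Ioo_subset_Icc_self hmem) hc
  rw [heq] at this
  linarith

lemma lt_rD_of_lt {D : ℕ} (hD : 2 ≤ D) {β a : ℝ} (hβ : ((D:ℝ) - 1) * β > 1)
    (ha : a ∈ Set.Icc (0:ℝ) 1) (h : gD D β a < 1) : a < rD D β := by
  obtain ⟨hmem, heq⟩ := rD_spec hD hβ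
  by_contra hc
  push_neg at hc
  have := (gD_strictMonoOn hD (beta_pos hD hβ)).monotoneOn (Set.Ioo_subset_Icc_self hmem) ha hc
  rw [heq] at this
  linarith

lemma rD_continuousOn {D : ℕ} (hD : 2 ≤ D) :
    ContinuousOn (rD D) {β : ℝ | ((D:ℝ) - 1) * β > 1} := by
  have hSopen : IsOpen {β : ℝ | ((D:ℝ) - 1) * β > 1} :=
    isOpen_lt continuous_const (continuous_const.mul continuous_id)
  intro β0 hβ0
  apply ContinuousAt.continuousWithinAt
  have hβ0' : ((D:ℝ) - 1) * β0 > 1 := hβ0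
  obtain ⟨hmem0, heq0⟩ := rD_spec hD hβ0'
  rw [Metric.continuousAt_iff]
  intro ε hε
  set x0 := rD D β0 with hx0
  set ε' := min ε (min x0 (1 - x0)) / 2 with hε'
  have hε'pos : 0 < ε' := by
    apply div_pos _ two_pos
    exact lt_min hε (lt_min hmem0.1 (by linarith [hmem0.2]))
  have ha : x0 - ε' ∈ Set.Icc (0:ℝ) 1 := by
    constructor
    · have : ε' ≤ x0 / 2 := by
        rw [hε']
        have : min ε (min x0 (1 - x0)) ≤ x0 := le_trans (min_le_right _ _) (min_le_left _ _)
        linarith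
      linarith [hmem0.1]
    · linarith [hmem0.2]
  have hb : x0 + ε' ∈ Set.Icc (0:ℝ) 1 := by
    constructor
    · linarith [hmem0.1]
    · have : ε' ≤ (1 - x0) / 2 := by
        rw [hε']
        have : min ε (min x0 (1 - x0)) ≤ 1 - x0 := le_trans (min_le_right _ _) (min_le_right _ _)
        linarith
      linarith
  have hga : gD D β0 (x0 - ε') < 1 := by
    rw [← heq0]
    exact gD_strictMonoOn hD (beta_pos hD hβ0') ha (Set.Ioo_subset_Icc_self hmem0) (by linarith)
  have hgb : 1 < gD D β0 (x0 + ε') := by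
    rw [← heq0]
    exact gD_strictMonoOn hD (beta_pos hD hβ0') (Set.Ioo_subset_Icc_self hmem0) hb (by linarith)
  have hev : ∀ᶠ β in 𝓝 β0, gD D β (x0 - ε') < 1 ∧ 1 < gD D β (x0 + ε') ∧
      ((D:ℝ) - 1) * β > 1 := by
    have h1 := (gD_contB D (x0 - ε') (beta_pos hD hβ0')).eventually_lt_const hga
    have h2 := (gD_contB D (x0 + ε') (beta_pos hD hβ0')).eventually_const_lt hgb
    have h3 : ∀ᶠ β in 𝓝 β0, ((D:ℝ) - 1) * β > 1 := hSopen.mem_nhds hβ0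
    filter_upwards [h1, h2, h3] with β p1 p2 p3
    exact ⟨p1, p2, p3⟩
  rw [Metric.eventually_nhds_iff] at hev
  obtain ⟨δ, hδ, hball⟩ := hev
  refine ⟨δ, hδ, fun {β} hdist => ?_⟩
  obtain ⟨p1, p2, p3⟩ := hball hdist
  have hlo := lt_rD_of_lt hD p3 ha p1
  have hhi := rD_lt_of_gt hD p3 hb p2
  have : |rD D β - x0| < ε' := abs_lt.2 ⟨by linarith, by linarith⟩
  have hε'ε : ε' ≤ ε / 2 := by
    rw [hε']
    have := min_le_left ε (min x0 (1 - x0))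
    linarith
  rw [Real.dist_eq]
  linarith [abs_lt.1 this]

end DecayAux

/-- For each real `β` with `(D-1)β > 1`, with `ℓ(β) = ⌊β⌋+1` and `η(β) = β - ⌊β⌋`,
the equation `1 = (D-1)(x + ⋯ + x^{ℓ(β)-1} + η(β) x^{ℓ(β)})` has a unique root
`x(β)` in `(0,1)`, and the function `q_D(β) = -log x(β)/log D` is well defined,
continuous on `{β : (D-1)β > 1}`, and takes values in `(0,1)`. -/
theorem decay_of_tails_jsq_stmt2 (D : ℕ) (hD : 2 ≤ D) :
    (∀ β : ℝ, ((D:ℝ) - 1) * β > 1 →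
      ∃! x : ℝ, x ∈ Set.Ioo (0:ℝ) 1 ∧
        1 = ((D:ℝ) - 1) *
          ((∑ j ∈ Finset.Icc 1 ⌊β⌋₊, x ^ j) + (β - (⌊β⌋₊ : ℝ)) * x ^ (⌊β⌋₊ + 1))) ∧
    ∃ q : ℝ → ℝ,
      ContinuousOn q {β : ℝ | ((D:ℝ) - 1) * β > 1} ∧
      ∀ β : ℝ, ((D:ℝ) - 1) * β > 1 →
        q β ∈ Set.Ioo (0:ℝ) 1 ∧
        (D:ℝ) ^ (-(q β)) ∈ Set.Ioo (0:ℝ) 1 ∧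
        1 = ((D:ℝ) - 1) *
          ((∑ j ∈ Finset.Icc 1 ⌊β⌋₊, ((D:ℝ) ^ (-(q β))) ^ j)
            + (β - (⌊β⌋₊ : ℝ)) * ((D:ℝ) ^ (-(q β))) ^ (⌊β⌋₊ + 1)) := by
  have hD1 : (1:ℝ) < (D:ℝ) := by
    have : (2:ℝ) ≤ (D:ℝ) := by exact_mod_cast hD
    linarith
  have hDpos : (0:ℝ) < (D:ℝ) := by linarith
  have hlogD : 0 < Real.log D := Real.log_pos hD1
  constructor
  · intro β hβ
    have h := gD_unique hD hβ
    simp only [gD, eq_comm] at h ⊢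
    exact h
  · refine ⟨fun β => -Real.log (rD D β) / Real.log D, ?_, ?_⟩
    · apply ContinuousOn.div_const
      apply ContinuousOn.neg
      apply Real.continuousOn_log.comp (rD_continuousOn hD)
      intro β hβ
      exact ne_of_gt (rD_spec hD hβ).1.1
    · intro β hβ
      obtain ⟨hmem, heq⟩ := rD_spec hD hβ
      have hrpos : 0 < rD D β := hmem.1
      have hlogr : Real.log (rD D β) < 0 := Real.log_neg hrpos hmem.2
      have hq : (D:ℝ) ^ (-(-Real.log (rD D β) / Real.log D)) = rD D β := by
        rw [Real.rpow_def_of_pos hDpos]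
        rw [neg_div, neg_neg]
        rw [mul_div_cancel₀ _ (ne_of_gt hlogD)]
        exact Real.exp_log hrpos
      refine ⟨⟨?_, ?_⟩, ?_, ?_⟩
      · exact div_pos (by linarith) hlogD
      · rw [div_lt_one hlogD]
        have := Real.log_lt_log (by positivity) (rD_gt_inv hD hβ)
        rw [Real.log_inv] at this
        linarith
      · rw [hq]; exact hmem
      · rw [hq]; exact heq.symm
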